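/- Uniform-in-time convergence by contradiction: let θ_k, θ : [0,T] → L²(T²) be such that (i) θ_k → θ in C([0,T]; L²_w) (i.e. for every test function φ ∈ L², sup_t |⟨θ_k(t) − θ(t), φ⟩| → 0), (ii) limsup_k sup_t (‖θ_k(t)‖_{L²} − ‖θ(t)‖_{L²}) ≤ 0, and (iii) t ↦ ‖θ(t)‖_{L²} is continuous and θ ∈ C([0,T]; L²_w). Then sup_t ‖θ_k(t) − θ(t)‖_{L²} → 0 as k → ∞. -/

import Mathlib

open MeasureTheory Filter Topology Set

noncomputable section

/-- The two-dimensional torus. -/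
abbrev T2 : Type := UnitAddCircle × UnitAddCircle

/-- Uniform-in-time convergence by contradiction: if `θ_k → θ` in
`C([0,T]; L²_w)` (uniform-in-time weak convergence), `limsup_k sup_t (‖θ_k(t)‖ − ‖θ(t)‖) ≤ 0`,
the norm `t ↦ ‖θ(t)‖` is continuous and `θ ∈ C([0,T]; L²_w)`, then
`sup_t ‖θ_k(t) − θ(t)‖ → 0`. -/
theorem stmt_4 (T : ℝ) (hT : 0 < T)
    (θk : ℕ → ℝ → Lp ℝ 2 (volume : Measure T2)) (θ : ℝ → Lp ℝ 2 (volume : Measure T2))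
    (hweak : ∀ φ : Lp ℝ 2 (volume : Measure T2), ∀ ε > 0, ∃ N, ∀ k ≥ N, ∀ t ∈ Icc 0 T,
      |(inner ℝ (θk k t - θ t) φ : ℝ)| ≤ ε)
    (hlimsup : ∀ ε > 0, ∃ N, ∀ k ≥ N, ∀ t ∈ Icc 0 T, ‖θk k t‖ - ‖θ t‖ ≤ ε)
    (hnormcont : ContinuousOn (fun t => ‖θ t‖) (Icc 0 T))
    (hweakcont : ∀ φ : Lp ℝ 2 (volume : Measure T2),
      ContinuousOn (fun t => (inner ℝ (θ t) φ : ℝ)) (Icc 0 T)) :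
    ∀ ε > 0, ∃ N, ∀ k ≥ N, ∀ t ∈ Icc 0 T, ‖θk k t - θ t‖ ≤ ε := by
  intro ε hε
  -- strong continuity of θ on [0,T]
  have hθcont : ContinuousOn θ (Icc 0 T) := by
    intro s hs
    have hg : ContinuousWithinAt
        (fun t => ‖θ t‖^2 - 2 * (inner ℝ (θ t) (θ s) : ℝ) + ‖θ s‖^2) (Icc 0 T) s :=
      (((hnormcont s hs).pow 2).sub
        (continuousWithinAt_const.mul ((hweakcont (θ s)) s hs))).add continuousWithinAt_const
    have hg0 : ‖θ s‖^2 - 2 * (inner ℝ (θ s) (θ s) : ℝ) + ‖θ s‖^2 = 0 := by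
      rw [real_inner_self_eq_norm_sq]; ring
    rw [ContinuousWithinAt, hg0] at hg
    have hsq : Tendsto (fun t => ‖θ t - θ s‖^2) (𝓝[Icc 0 T] s) (𝓝 0) := by
      convert hg using 2 with t
      rw [@norm_sub_sq_real]
    have hnorm : Tendsto (fun t => ‖θ t - θ s‖) (𝓝[Icc 0 T] s) (𝓝 0) := by
      have h2 := hsq.sqrt
      rw [Real.sqrt_zero] at h2
      convert h2 using 2 with t
      rw [Real.sqrt_sq (norm_nonneg _)]
    exact tendsto_iff_norm_sub_tendsto_zero.mpr hnorm
  have hIcc : IsCompact (Icc (0:ℝ) T) := isCompact_Icc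
  have hne : (Icc (0:ℝ) T).Nonempty := ⟨0, by constructor <;> [rfl; exact hT.le]⟩
  -- bound M on ‖θ t‖
  obtain ⟨t₀, ht₀, hmax⟩ := hIcc.exists_isMaxOn hne hnormcont
  set M : ℝ := ‖θ t₀‖ with hM
  have hM0 : 0 ≤ M := norm_nonneg _
  set B : ℝ := 2 * M + 1 with hB
  have hB1 : (1:ℝ) ≤ B := by linarith
  have hBpos : (0:ℝ) < B := by linarith
  -- finite δ-net of θ '' Icc
  set δ : ℝ := ε^2 / (8 * B) with hδ
  have hδpos : 0 < δ := by positivity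
  have hK : IsCompact (θ '' Icc 0 T) := hIcc.image_of_continuousOn hθcont
  obtain ⟨net, hnetfin, hnetcov⟩ := (Metric.totallyBounded_iff.mp hK.totallyBounded) δ hδpos
  -- choose N for each net point
  set η : ℝ := ε^2 / 8 with hη
  have hηpos : 0 < η := by positivity
  choose Nf hNf using fun φ : Lp ℝ 2 (volume : Measure T2) => hweak φ η hηpos
  set N₁ : ℕ := hnetfin.toFinset.sup Nf with hN₁
  set η' : ℝ := min (ε^2 / (4 * B)) 1 with hη'
  have hη'pos : 0 < η' := lt_min (by positivity) one_pos
  obtain ⟨N₂, hN₂⟩ := hlimsup η' hη'pos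
  refine ⟨max N₁ N₂, fun k hk t ht => ?_⟩
  -- net point near θ t
  have hmem : θ t ∈ θ '' Icc 0 T := ⟨t, ht, rfl⟩
  obtain ⟨y, hy, hyball⟩ := mem_iUnion₂.mp (hnetcov hmem)
  have hydist : ‖θ t - y‖ < δ := by
    rw [Metric.mem_ball, dist_eq_norm] at hyball; exact hyball
  -- bounds
  have hab : ‖θk k t‖ - ‖θ t‖ ≤ η' := hN₂ k (le_trans (le_max_right _ _) hk) t ht
  have hbM : ‖θ t‖ ≤ M := hmax ht
  have hinnery : |(inner ℝ (θk k t - θ t) y : ℝ)| ≤ η := by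
    have hyN : Nf y ≤ N₁ := Finset.le_sup (hnetfin.mem_toFinset.mpr hy)
    exact hNf y k (le_trans (le_trans hyN (le_max_left _ _)) hk) t ht
  set a := ‖θk k t‖
  set b := ‖θ t‖
  set d := ‖θk k t - θ t‖
  have hd0 : 0 ≤ d := norm_nonneg _
  have ha0 : 0 ≤ a := norm_nonneg _
  have hb0 : 0 ≤ b := norm_nonneg _
  have hdB : d ≤ B := by
    have : d ≤ a + b := norm_sub_le _ _
    have hη'1 : η' ≤ 1 := min_le_right _ _
    simp only [hB]; linarith
  -- key identity
  have hid : d^2 = a^2 - b^2 + (-2) * (inner ℝ (θk k t - θ t) (θ t) : ℝ) := by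
    simp only [d, a, b]
    rw [@norm_sub_sq_real, inner_sub_left, real_inner_self_eq_norm_sq]
    ring
  -- split inner product
  have hsplit : (inner ℝ (θk k t - θ t) (θ t) : ℝ)
      = (inner ℝ (θk k t - θ t) y : ℝ) + (inner ℝ (θk k t - θ t) (θ t - y) : ℝ) := by
    rw [← inner_add_right]
    congr 1
    abel
  have hcs : |(inner ℝ (θk k t - θ t) (θ t - y) : ℝ)| ≤ d * δ := by
    calc |(inner ℝ (θk k t - θ t) (θ t - y) : ℝ)| ≤ d * ‖θ t - y‖ := abs_real_inner_le_norm _ _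
    _ ≤ d * δ := mul_le_mul_of_nonneg_left hydist.le hd0
  -- combine
  have hinnerbound : |(inner ℝ (θk k t - θ t) (θ t) : ℝ)| ≤ η + d * δ := by
    rw [hsplit]
    exact le_trans (abs_add_le _ _) (add_le_add hinnery hcs)
  have hη'B : η' ≤ ε^2 / (4 * B) := min_le_left _ _
  have hdsq : d^2 ≤ ε^2 := by
    have hsum : a + b ≤ B := by
      have hη'1 : η' ≤ 1 := min_le_right _ _
      simp only [hB]; linarith
    have h1 : a^2 - b^2 ≤ η' * B := by
      have e1 : (a - b) * (a + b) ≤ η' * (a + b) :=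
        mul_le_mul_of_nonneg_right hab (by linarith)
      have e2 : η' * (a + b) ≤ η' * B := mul_le_mul_of_nonneg_left hsum hη'pos.le
      nlinarith
    have h2 : (-2) * (inner ℝ (θk k t - θ t) (θ t) : ℝ) ≤ 2 * (η + d * δ) := by
      have := neg_abs_le (inner ℝ (θk k t - θ t) (θ t) : ℝ)
      linarith [hinnerbound]
    have h3 : d * δ ≤ B * δ := mul_le_mul_of_nonneg_right hdB hδpos.le
    have h4 : η' * B ≤ ε^2 / 4 := by
      calc η' * B ≤ (ε^2 / (4*B)) * B := mul_le_mul_of_nonneg_right hη'B hBpos.le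
      _ = ε^2 / 4 := by field_simp
    have h5 : B * δ = ε^2 / 8 := by
      simp only [hδ]; field_simp
    rw [hid]
    have hηe : η = ε^2/8 := rfl
    set c : ℝ := (inner ℝ (θk k t - θ t) (θ t) : ℝ) with hc
    clear_value c
    clear hid hsplit hcs hinnerbound hc
    clear_value a b d M B δ η η'
    linarith [sq_nonneg ε]
  nlinarith [hε.le]
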